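/- arXiv:2206.10566 — 7 statements merged into one kernel-verified Lean document; each statement's English description precedes it below -/
import Mathlib

section
/- The central label is the mean: for a random variable Y on X with E[Y] ∈ X, the unique minimizer over z ∈ X of E[D_F[Y||z]] is z = E[Y]. -/
open MeasureTheory

/-- Strict gradient inequality for strictly convex functions. -/
lemma grad_lt_aux {d : ℕ} {X : Set (EuclideanSpace ℝ (Fin d))} (hXv : Convex ℝ X)
    {F : EuclideanSpace ℝ (Fin d) → ℝ} (hF : StrictConvexOn ℝ X F)
    {z m g : EuclideanSpace ℝ (Fin d)} (hg : HasGradientAt F g z)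
    (hz : z ∈ X) (hm : m ∈ X) (hne : m ≠ z) :
    (inner ℝ g (m - z) : ℝ) < F m - F z := by
  set L : ℝ → EuclideanSpace ℝ (Fin d) := fun t => (AffineMap.lineMap z m) t with hL
  have hmemL : ∀ t ∈ Set.Icc (0:ℝ) 1, L t ∈ X := by
    intro t ht
    rw [hL]
    simp only [AffineMap.lineMap_apply_module]
    exact hXv hz hm (by linarith [ht.1, ht.2]) ht.1 (by ring)
  have hgconv : ConvexOn ℝ (Set.Icc (0:ℝ) 1) (F ∘ L) :=
    (hF.convexOn.comp_affineMap (AffineMap.lineMap z m)).subset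
      (fun t ht => hmemL t ht) (convex_Icc 0 1)
  have hd : HasDerivAt (F ∘ L) ((inner ℝ g (m - z) : ℝ)) 0 := by
    have h1 : HasDerivAt L (m - z) 0 := by
      have hb : HasDerivAt (fun t : ℝ => t • (m - z) + z) (m - z) 0 := by
        simpa using ((hasDerivAt_id (0:ℝ)).smul_const (m - z)).add_const z
      exact hb.congr_of_eventuallyEq (Filter.Eventually.of_forall fun t => by
        rw [hL]; simp [AffineMap.lineMap_apply_module'])
    have h2 : HasFDerivAt F (InnerProductSpace.toDual ℝ _ g) z :=
      hasGradientAt_iff_hasFDerivAt.mp hg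
    have h3 : L 0 = z := by rw [hL]; simp
    have := (h3 ▸ h2 : HasFDerivAt F _ (L 0)).comp_hasDerivAt 0 h1
    simpa using this
  have hmem12 : (1/2 : ℝ) ∈ Set.Icc (0:ℝ) 1 := by norm_num
  have hs : (inner ℝ g (m - z) : ℝ) ≤ slope (F ∘ L) 0 (1/2) :=
    hgconv.le_slope_of_hasDerivAt (by norm_num) hmem12 (by norm_num) hd
  have hmid : F (L (1/2)) < (1/2) * F z + (1/2) * F m := by
    rw [hL]
    simp only [AffineMap.lineMap_apply_module]
    have := hF.2 hz hm (fun h => hne h.symm) (by norm_num : (0:ℝ) < 1/2)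
      (by norm_num : (0:ℝ) < 1/2) (by norm_num)
    convert this using 3 <;> norm_num
    rfl
  have h0 : (F ∘ L) 0 = F z := by rw [hL]; simp
  rw [slope_def_field, h0] at hs
  have : ((F ∘ L) (1/2) - F z) / ((1/2 : ℝ) - 0) = 2 * (F (L (1/2)) - F z) := by
    simp [Function.comp]; ring
  rw [this] at hs
  linarith

/-- The central label is the mean: the unique minimizer over `z ∈ X` of `E[D_F[Y‖z]]`
is `z = E[Y]`. -/
theorem central_label_is_mean {d : ℕ}
    (X : Set (EuclideanSpace ℝ (Fin d))) (hXc : IsClosed X) (hXv : Convex ℝ X)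
    (F : EuclideanSpace ℝ (Fin d) → ℝ)
    (f' : EuclideanSpace ℝ (Fin d) → EuclideanSpace ℝ (Fin d))
    (hF : StrictConvexOn ℝ X F)
    (hdiff : ∀ x ∈ X, HasGradientAt F (f' x) x)
    (D : EuclideanSpace ℝ (Fin d) → EuclideanSpace ℝ (Fin d) → ℝ)
    (hD : ∀ y x, D y x = F y - F x - ((inner ℝ (f' x) (y - x) : ℝ)))
    {Ω : Type*} [MeasurableSpace Ω] (μ : Measure Ω) [IsProbabilityMeasure μ]
    (Y : Ω → EuclideanSpace ℝ (Fin d))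
    (hYm : AEMeasurable Y μ) (hYint : Integrable Y μ)
    (hYX : ∀ᵐ ω ∂μ, Y ω ∈ X) (hEY : (∫ ω, Y ω ∂μ) ∈ X)
    (hint : ∀ z ∈ X, Integrable (fun ω => D (Y ω) z) μ) :
    (∀ z ∈ X, ∫ ω, D (Y ω) (∫ ω', Y ω' ∂μ) ∂μ ≤ ∫ ω, D (Y ω) z ∂μ) ∧
    (∀ z ∈ X, ∫ ω, D (Y ω) z ∂μ = ∫ ω, D (Y ω) (∫ ω', Y ω' ∂μ) ∂μ →
      z = ∫ ω', Y ω' ∂μ) := by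
  set m : EuclideanSpace ℝ (Fin d) := ∫ ω', Y ω' ∂μ with hm
  -- integrability of the inner product terms
  have hinner : ∀ z : EuclideanSpace ℝ (Fin d),
      Integrable (fun ω => (inner ℝ (f' z) (Y ω - z) : ℝ)) μ := fun z =>
    (innerSL ℝ (f' z)).integrable_comp (hYint.sub (integrable_const z))
  -- integrability of F ∘ Y
  have hFY : Integrable (fun ω => F (Y ω)) μ := by
    have heq : (fun ω => F (Y ω)) =
        fun ω => D (Y ω) m + ((inner ℝ (f' m) (Y ω - m) : ℝ) + F m) := by
      funext ω; rw [hD]; ring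
    rw [heq]
    exact (hint m hEY).add ((hinner m).add (integrable_const (F m)))
  -- value of the inner integral
  have hinnerval : ∀ z : EuclideanSpace ℝ (Fin d),
      ∫ ω, (inner ℝ (f' z) (Y ω - z) : ℝ) ∂μ = (inner ℝ (f' z) (m - z) : ℝ) := by
    intro z
    have h1 := (innerSL ℝ (f' z)).integral_comp_comm (hYint.sub (integrable_const z))
    have h2 : ∫ ω, (Y ω - z) ∂μ = m - z := by
      rw [integral_sub hYint (integrable_const z), integral_const]
      simp [hm]
    simpa [h2] using h1
  -- the key formula
  have key : ∀ z : EuclideanSpace ℝ (Fin d),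
      ∫ ω, D (Y ω) z ∂μ =
        (∫ ω, F (Y ω) ∂μ) - F z - (inner ℝ (f' z) (m - z) : ℝ) := by
    intro z
    have heq : (fun ω => D (Y ω) z) =
        fun ω => F (Y ω) - ((inner ℝ (f' z) (Y ω - z) : ℝ) + F z) := by
      funext ω; rw [hD]; ring
    have hg : Integrable (fun ω => (inner ℝ (f' z) (Y ω - z) : ℝ) + F z) μ :=
      (hinner z).add (integrable_const (F z))
    rw [heq, integral_sub hFY hg,
      integral_add (hinner z) (integrable_const (F z)), hinnerval z, integral_const]
    simp; ring
  have keym : ∫ ω, D (Y ω) m ∂μ = (∫ ω, F (Y ω) ∂μ) - F m := by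
    rw [key m]; simp
  -- strict gradient inequality
  have hstrict : ∀ z ∈ X, z ≠ m → (inner ℝ (f' z) (m - z) : ℝ) < F m - F z :=
    fun z hz hne => grad_lt_aux hXv hF (hdiff z hz) hz hEY (fun h => hne h.symm)
  constructor
  · intro z hz
    rw [key z, keym]
    rcases eq_or_ne z m with rfl | hne
    · simp
    · have := hstrict z hz hne
      linarith
  · intro z hz hEq
    by_contra hne
    rw [key z, keym] at hEq
    have := hstrict z hz hne
    linarith
end

section
/- Dual mean characterization: the unique minimizer over z ∈ X of E[D_F[z||X]] is z = (E[∇F(X)])*, i.e. ∇F^{-1}(E[∇F(X)]): the primal pullback of the mean of X in dual coordinates. -/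
open MeasureTheory InnerProductSpace

lemma grad_ineq {d : ℕ} {S : Set (EuclideanSpace ℝ (Fin d))} {F : EuclideanSpace ℝ (Fin d) → ℝ}
    (hF : ConvexOn ℝ S F) {x y : EuclideanSpace ℝ (Fin d)} (hx : x ∈ S) (hy : y ∈ S)
    {gx : EuclideanSpace ℝ (Fin d)} (hg : HasGradientAt F gx x) :
    (inner ℝ gx (y - x) : ℝ) ≤ F y - F x := by
  have hline : HasDerivAt (fun t : ℝ => x + t • (y - x)) (y - x) 0 := by
    simpa using ((hasDerivAt_id (0:ℝ)).smul_const (y - x)).const_add x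
  have hφ : HasDerivAt (fun t : ℝ => F (x + t • (y - x))) (inner ℝ gx (y - x) : ℝ) 0 := by
    have hFd : HasFDerivAt F ((InnerProductSpace.toDual ℝ (EuclideanSpace ℝ (Fin d))) gx)
        ((fun t : ℝ => x + t • (y - x)) 0) := by simpa using hg.hasFDerivAt
    have h1 := hFd.comp_hasDerivAt 0 hline
    simp only [InnerProductSpace.toDual_apply_apply] at h1
    exact h1
  have hslope := hasDerivAt_iff_tendsto_slope.1 hφ
  have hslope' : Filter.Tendsto (slope (fun t : ℝ => F (x + t • (y - x))) 0)
      (nhdsWithin 0 (Set.Ioi 0)) (nhds (inner ℝ gx (y - x) : ℝ)) :=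
    hslope.mono_left (nhdsWithin_mono 0 (fun t ht => ne_of_gt ht))
  refine le_of_tendsto hslope' ?_
  filter_upwards [Ioc_mem_nhdsGT_of_mem (by norm_num : (0:ℝ) ∈ Set.Ico 0 1)] with t ht
  have ht0 : 0 < t := ht.1
  have hconv : F (x + t • (y - x)) ≤ (1 - t) * F x + t * F y := by
    have h2 := hF.2 hx hy (by linarith [ht.2] : (0:ℝ) ≤ 1 - t) (le_of_lt ht0) (by ring)
    have heq : (1 - t) • x + t • y = x + t • (y - x) := by
      rw [smul_sub, sub_smul]; module
    rw [heq] at h2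
    simpa [smul_eq_mul] using h2
  rw [slope_def_field]
  simp only [zero_smul, add_zero, sub_zero]
  rw [div_le_iff₀ ht0]
  nlinarith

lemma grad_ineq_strict {d : ℕ} {S : Set (EuclideanSpace ℝ (Fin d))}
    {F : EuclideanSpace ℝ (Fin d) → ℝ}
    (hF : StrictConvexOn ℝ S F) {x y : EuclideanSpace ℝ (Fin d)} (hx : x ∈ S) (hy : y ∈ S)
    (hne : y ≠ x)
    {gx : EuclideanSpace ℝ (Fin d)} (hg : HasGradientAt F gx x) :
    (inner ℝ gx (y - x) : ℝ) < F y - F x := by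
  set m := (1/2 : ℝ) • x + (1/2 : ℝ) • y with hm
  have hmS : m ∈ S := hF.1 hx hy (by norm_num) (by norm_num) (by norm_num)
  have hmid := hF.2 hx hy (Ne.symm hne) (by norm_num : (0:ℝ) < 1/2)
    (by norm_num : (0:ℝ) < 1/2) (by norm_num : (1/2 : ℝ) + 1/2 = 1)
  rw [smul_eq_mul, smul_eq_mul] at hmid
  have h1 : (inner ℝ gx (m - x) : ℝ) ≤ F m - F x := grad_ineq hF.convexOn hx hmS hg
  have hmx : m - x = (1/2 : ℝ) • (y - x) := by rw [hm, smul_sub]; module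
  rw [hmx, real_inner_smul_right] at h1
  linarith

/-- Dual mean characterization: the unique minimizer over `z ∈ X` of `E[D_F[z‖X]]`
is `z = ∇F⁻¹(E[∇F(X)])`, the primal pullback of the mean of `X` in dual coordinates. -/
theorem dual_mean_is_central_prediction {d : ℕ}
    (S : Set (EuclideanSpace ℝ (Fin d))) (hSc : IsClosed S) (hSv : Convex ℝ S)
    (F : EuclideanSpace ℝ (Fin d) → ℝ)
    (f' g : EuclideanSpace ℝ (Fin d) → EuclideanSpace ℝ (Fin d))
    (hF : StrictConvexOn ℝ S F)
    (hdiff : ∀ x ∈ S, HasGradientAt F (f' x) x)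
    -- g = ∇F⁻¹ inverts the gradient
    (hg : ∀ x ∈ S, g (f' x) = x)
    (D : EuclideanSpace ℝ (Fin d) → EuclideanSpace ℝ (Fin d) → ℝ)
    (hD : ∀ y x, D y x = F y - F x - ((inner ℝ (f' x) (y - x) : ℝ)))
    {Ω : Type*} [MeasurableSpace Ω] (μ : Measure Ω) [IsProbabilityMeasure μ]
    (X : Ω → EuclideanSpace ℝ (Fin d))
    (hXm : AEMeasurable X μ) (hXS : ∀ᵐ ω ∂μ, X ω ∈ S)
    (hdint : Integrable (fun ω => f' (X ω)) μ)
    -- E[∇F(X)] is in the range of ∇F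
    (hrange : f' (g (∫ ω, f' (X ω) ∂μ)) = ∫ ω, f' (X ω) ∂μ)
    (hmem : g (∫ ω, f' (X ω) ∂μ) ∈ S)
    (hint : ∀ z ∈ S, Integrable (fun ω => D z (X ω)) μ) :
    (∀ z ∈ S, ∫ ω, D (g (∫ ω', f' (X ω') ∂μ)) (X ω) ∂μ ≤ ∫ ω, D z (X ω) ∂μ) ∧
    (∀ z ∈ S, ∫ ω, D z (X ω) ∂μ = ∫ ω, D (g (∫ ω', f' (X ω') ∂μ)) (X ω) ∂μ →
      z = g (∫ ω', f' (X ω') ∂μ)) := by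
  set v : EuclideanSpace ℝ (Fin d) := ∫ ω, f' (X ω) ∂μ with hv
  set m : EuclideanSpace ℝ (Fin d) := g v with hmdef
  have key : ∀ z ∈ S, (∫ ω, D z (X ω) ∂μ) - (∫ ω, D m (X ω) ∂μ)
      = F z - F m - (inner ℝ (f' m) (z - m) : ℝ) := by
    intro z hz
    have hintinner : Integrable (fun ω => (inner ℝ (z - m) (f' (X ω)) : ℝ)) μ :=
      (innerSL ℝ (z - m)).integrable_comp hdint
    have hdiffeq : ∀ ω, D z (X ω) - D m (X ω)
        = F z - F m - (inner ℝ (z - m) (f' (X ω)) : ℝ) := by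
      intro ω
      have h3 : (inner ℝ (f' (X ω)) (z - X ω) : ℝ) - (inner ℝ (f' (X ω)) (m - X ω) : ℝ)
          = (inner ℝ (z - m) (f' (X ω)) : ℝ) := by
        rw [← inner_sub_right, real_inner_comm]
        congr 1
        abel
      rw [hD, hD]
      linarith [h3]
    calc (∫ ω, D z (X ω) ∂μ) - (∫ ω, D m (X ω) ∂μ)
        = ∫ ω, (D z (X ω) - D m (X ω)) ∂μ :=
          (integral_sub (hint z hz) (hint m hmem)).symm
      _ = ∫ ω, (F z - F m - (inner ℝ (z - m) (f' (X ω)) : ℝ)) ∂μ := by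
          simp_rw [hdiffeq]
      _ = (F z - F m) - ∫ ω, (inner ℝ (z - m) (f' (X ω)) : ℝ) ∂μ := by
          rw [integral_sub (integrable_const _) hintinner, integral_const]
          simp
      _ = F z - F m - (inner ℝ (z - m) v : ℝ) := by
          have h4 : ∫ ω, (inner ℝ (z - m) (f' (X ω)) : ℝ) ∂μ
              = (inner ℝ (z - m) (∫ ω, f' (X ω) ∂μ) : ℝ) :=
            (innerSL ℝ (z - m)).integral_comp_comm hdint
          rw [h4]
      _ = F z - F m - (inner ℝ (f' m) (z - m) : ℝ) := by
          rw [hrange, real_inner_comm]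
  constructor
  · intro z hz
    have h1 := key z hz
    have h2 : (inner ℝ (f' m) (z - m) : ℝ) ≤ F z - F m :=
      grad_ineq hF.convexOn hmem hz (hdiff m hmem)
    linarith
  · intro z hz heq
    by_contra hne
    have h1 := key z hz
    have h2 : (inner ℝ (f' m) (z - m) : ℝ) < F z - F m :=
      grad_ineq_strict hF hmem hz hne (hdiff m hmem)
    rw [heq] at h1
    linarith
end

section
/- Dual decomposition for Bregman divergences: for any z ∈ X, E[D_F[z||X]] = D_F[z || ℰX] + E[D_F[ℰX || X]], where ℰX = ∇F^{-1}(E ∇F(X)) is the dual mean. -/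
open MeasureTheory


/-- Dual decomposition for Bregman divergences:
`E[D_F[z‖X]] = D_F[z ‖ ℰX] + E[D_F[ℰX ‖ X]]` where `ℰX = ∇F⁻¹(E ∇F(X))`. -/
theorem bregman_dual_decomposition {d : ℕ}
    (S : Set (EuclideanSpace ℝ (Fin d))) (hSc : IsClosed S) (hSv : Convex ℝ S)
    (F : EuclideanSpace ℝ (Fin d) → ℝ)
    (f' g : EuclideanSpace ℝ (Fin d) → EuclideanSpace ℝ (Fin d))
    (hF : StrictConvexOn ℝ S F)
    (hdiff : ∀ x ∈ S, HasGradientAt F (f' x) x)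
    (hg : ∀ x ∈ S, g (f' x) = x)
    (D : EuclideanSpace ℝ (Fin d) → EuclideanSpace ℝ (Fin d) → ℝ)
    (hD : ∀ y x, D y x = F y - F x - ((inner ℝ (f' x) (y - x) : ℝ)))
    {Ω : Type*} [MeasurableSpace Ω] (μ : Measure Ω) [IsProbabilityMeasure μ]
    (X : Ω → EuclideanSpace ℝ (Fin d))
    (hXm : AEMeasurable X μ) (hXS : ∀ᵐ ω ∂μ, X ω ∈ S)
    (hXint : Integrable X μ)
    (hdint : Integrable (fun ω => f' (X ω)) μ)
    (hFint : Integrable (fun ω => F (X ω)) μ)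
    (EX : EuclideanSpace ℝ (Fin d))
    (hEX : EX = g (∫ ω, f' (X ω) ∂μ))
    (hrange : f' EX = ∫ ω, f' (X ω) ∂μ) (hmem : EX ∈ S)
    (hint : ∀ z ∈ S, Integrable (fun ω => D z (X ω)) μ) :
    ∀ z ∈ S, ∫ ω, D z (X ω) ∂μ = D z EX + ∫ ω, D EX (X ω) ∂μ := by
  intro z hz
  have hintz := hint z hz
  have hintE := hint EX hmem
  have hpt : ∀ ω, D z (X ω) - D EX (X ω)
      = (F z - F EX) - (inner ℝ (z - EX) (f' (X ω)) : ℝ) := by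
    intro ω
    rw [hD, hD]
    have h1 : (inner ℝ (f' (X ω)) (z - X ω) : ℝ) - inner ℝ (f' (X ω)) (EX - X ω)
        = inner ℝ (f' (X ω)) (z - EX) := by
      rw [← inner_sub_right]; congr 1; abel
    have h2 : (inner ℝ (z - EX) (f' (X ω)) : ℝ) = inner ℝ (f' (X ω)) (z - EX) :=
      real_inner_comm _ _
    linarith [h1, h2]
  have hinner : Integrable (fun ω => (inner ℝ (z - EX) (f' (X ω)) : ℝ)) μ := by
    have := (innerSL ℝ (z - EX)).integrable_comp hdint
    simpa only [innerSL_apply_apply] using this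
  have key : ∫ ω, (D z (X ω) - D EX (X ω)) ∂μ = D z EX := by
    calc ∫ ω, (D z (X ω) - D EX (X ω)) ∂μ
        = ∫ ω, ((F z - F EX) - (inner ℝ (z - EX) (f' (X ω)) : ℝ)) ∂μ := by
          simp_rw [hpt]
      _ = (F z - F EX) - ∫ ω, (inner ℝ (z - EX) (f' (X ω)) : ℝ) ∂μ := by
          rw [integral_sub (integrable_const _) hinner, integral_const]
          simp
      _ = (F z - F EX) - (inner ℝ (z - EX) (∫ ω, f' (X ω) ∂μ) : ℝ) := by
          rw [integral_inner hdint]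
      _ = D z EX := by
          rw [hD, ← hrange, real_inner_comm]
  have := integral_sub hintz hintE
  rw [key] at this
  linarith [this]
end

section
/- Bias-variance decomposition for Bregman divergences: for independent X-valued random variables Y (label) and X (prediction), E D_F[Y||X] = E D_F[Y||E Y] + D_F[E Y || ℰX] + E D_F[ℰX || X], where ℰX = ∇F^{-1}(E ∇F(X)). -/
open MeasureTheory ProbabilityTheory


/-- Bias-variance decomposition for Bregman divergences: for independent label `Y` and
prediction `X`, `E D_F[Y‖X] = E D_F[Y‖E Y] + D_F[E Y ‖ ℰX] + E D_F[ℰX ‖ X]`. -/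
theorem bregman_bias_variance_decomposition {d : ℕ}
    (S : Set (EuclideanSpace ℝ (Fin d))) (hSc : IsClosed S) (hSv : Convex ℝ S)
    (F : EuclideanSpace ℝ (Fin d) → ℝ)
    (f' g : EuclideanSpace ℝ (Fin d) → EuclideanSpace ℝ (Fin d))
    (hF : StrictConvexOn ℝ S F)
    (hdiff : ∀ x ∈ S, HasGradientAt F (f' x) x)
    (hg : ∀ x ∈ S, g (f' x) = x)
    (D : EuclideanSpace ℝ (Fin d) → EuclideanSpace ℝ (Fin d) → ℝ)
    (hD : ∀ y x, D y x = F y - F x - ((inner ℝ (f' x) (y - x) : ℝ)))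
    {Ω : Type*} [MeasurableSpace Ω] (μ : Measure Ω) [IsProbabilityMeasure μ]
    (Y X : Ω → EuclideanSpace ℝ (Fin d))
    (hYm : AEMeasurable Y μ) (hXm : AEMeasurable X μ)
    (hindep : IndepFun Y X μ)
    (hYS : ∀ᵐ ω ∂μ, Y ω ∈ S) (hXS : ∀ᵐ ω ∂μ, X ω ∈ S)
    (hYint : Integrable Y μ) (hXint : Integrable X μ)
    (hFYint : Integrable (fun ω => F (Y ω)) μ)
    (hFXint : Integrable (fun ω => F (X ω)) μ)
    (hdint : Integrable (fun ω => f' (X ω)) μ)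
    (hEY : (∫ ω, Y ω ∂μ) ∈ S)
    (EX : EuclideanSpace ℝ (Fin d))
    (hEX : EX = g (∫ ω, f' (X ω) ∂μ))
    (hrange : f' EX = ∫ ω, f' (X ω) ∂μ) (hmem : EX ∈ S)
    (hintYX : Integrable (fun ω => D (Y ω) (X ω)) μ)
    (hintBayes : Integrable (fun ω => D (Y ω) (∫ ω', Y ω' ∂μ)) μ)
    (hintVar : Integrable (fun ω => D EX (X ω)) μ) :
    ∫ ω, D (Y ω) (X ω) ∂μ
      = (∫ ω, D (Y ω) (∫ ω', Y ω' ∂μ) ∂μ)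
        + D (∫ ω', Y ω' ∂μ) EX
        + ∫ ω, D EX (X ω) ∂μ := by
  classical
  set m : EuclideanSpace ℝ (Fin d) := ∫ ω', Y ω' ∂μ with hm
  -- measurable version of `f'` on `S`
  set φ : EuclideanSpace ℝ (Fin d) → EuclideanSpace ℝ (Fin d) := fun x => gradient F x with hφ
  have hφm : Measurable φ := by
    have h1 : Measurable (fderiv ℝ F) := measurable_fderiv ℝ F
    exact ((InnerProductSpace.toDual ℝ
      (EuclideanSpace ℝ (Fin d))).symm.continuous.measurable).comp h1
  have hφeq : ∀ x ∈ S, φ x = f' x := by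
    intro x hx
    rw [hφ]
    exact (hdiff x hx).gradient
  have hfX : (fun ω => f' (X ω)) =ᵐ[μ] (fun ω => φ (X ω)) := by
    filter_upwards [hXS] with ω h using (hφeq _ h).symm
  have hZint : Integrable (fun ω => φ (X ω)) μ := hdint.congr hfX
  set z : EuclideanSpace ℝ (Fin d) := ∫ ω, φ (X ω) ∂μ with hzdef
  have hz : f' EX = z := by rw [hrange, hzdef]; exact integral_congr_ae hfX
  -- coordinates
  let P : ∀ i : Fin d, EuclideanSpace ℝ (Fin d) →L[ℝ] ℝ := fun i => EuclideanSpace.proj i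
  have hPapp : ∀ (i : Fin d) (x : EuclideanSpace ℝ (Fin d)), P i x = x i := fun i x => rfl
  have hYi : ∀ i : Fin d, Integrable (fun ω => Y ω i) μ := fun i => by
    simpa [hPapp] using (P i).integrable_comp hYint
  have hZi : ∀ i : Fin d, Integrable (fun ω => φ (X ω) i) μ := fun i => by
    simpa [hPapp] using (P i).integrable_comp hZint
  have hci : ∀ i : Fin d, IndepFun (fun ω => φ (X ω) i) (fun ω => Y ω i) μ := by
    intro i
    have h1 : Measurable fun x : EuclideanSpace ℝ (Fin d) => φ x i :=
      ((P i).continuous.measurable).comp hφm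
    have h2 : Measurable fun x : EuclideanSpace ℝ (Fin d) => x i :=
      (P i).continuous.measurable
    exact hindep.symm.comp h1 h2
  have hexp : ∀ a b : EuclideanSpace ℝ (Fin d), (inner ℝ a b : ℝ) = ∑ i, a i * b i := by
    intro a b
    simp [PiLp.inner_apply, RCLike.inner_apply, starRingEnd_apply, mul_comm]
  -- the key cross term identity, via independence
  have hkey : (∫ ω, (inner ℝ (φ (X ω)) (Y ω) : ℝ) ∂μ) = (inner ℝ z m : ℝ) := by
    have hint : ∀ i : Fin d, Integrable (fun ω => φ (X ω) i * Y ω i) μ := fun i =>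
      (hci i).integrable_mul (hZi i) (hYi i)
    calc ∫ ω, (inner ℝ (φ (X ω)) (Y ω) : ℝ) ∂μ
        = ∫ ω, ∑ i, φ (X ω) i * Y ω i ∂μ := by simp only [hexp]
      _ = ∑ i, ∫ ω, φ (X ω) i * Y ω i ∂μ :=
          integral_finset_sum _ (fun i _ => hint i)
      _ = ∑ i, (∫ ω, φ (X ω) i ∂μ) * (∫ ω, Y ω i ∂μ) :=
          Finset.sum_congr rfl fun i _ => (hci i).integral_fun_mul_eq_mul_integral (hZi i).1 (hYi i).1
      _ = ∑ i, z i * m i := by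
          refine Finset.sum_congr rfl fun i _ => ?_
          have h1 : (∫ ω, φ (X ω) i ∂μ) = z i := by
            simpa [hPapp] using (P i).integral_comp_comm hZint
          have h2 : (∫ ω, Y ω i ∂μ) = m i := by
            simpa [hPapp, ← hm] using (P i).integral_comp_comm hYint
          rw [h1, h2]
      _ = (inner ℝ z m : ℝ) := (hexp z m).symm
  -- integrability of the inner ℝ product terms
  have hinnerEX : Integrable (fun ω => (inner ℝ (φ (X ω)) EX : ℝ)) μ := by
    have h : (fun ω => (inner ℝ (φ (X ω)) EX : ℝ)) = fun ω => (innerSL ℝ EX) (φ (X ω)) := by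
      funext ω
      simp only [innerSL_apply_apply]
      exact real_inner_comm _ _
    rw [h]
    exact (innerSL ℝ EX).integrable_comp hZint
  have hE1 : Integrable (fun ω => (inner ℝ (φ (X ω)) (X ω) : ℝ)) μ := by
    have hae : (fun ω => (inner ℝ (φ (X ω)) (X ω) : ℝ)) =ᵐ[μ]
        fun ω => D EX (X ω) - F EX + F (X ω) + (inner ℝ (φ (X ω)) EX : ℝ) := by
      filter_upwards [hXS] with ω h
      rw [hD, ← hφeq _ h, inner_sub_right]; ring
    exact ((((hintVar.sub (integrable_const (F EX))).add hFXint).add hinnerEX)).congr hae.symm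
  have hCint : Integrable (fun ω => (inner ℝ (φ (X ω)) (Y ω) : ℝ)) μ := by
    have hae : (fun ω => (inner ℝ (φ (X ω)) (Y ω) : ℝ)) =ᵐ[μ]
        fun ω => F (Y ω) - F (X ω) + (inner ℝ (φ (X ω)) (X ω) : ℝ) - D (Y ω) (X ω) := by
      filter_upwards [hXS] with ω h
      rw [hD, ← hφeq _ h, inner_sub_right]; ring
    exact (((hFYint.sub hFXint).add hE1).sub hintYX).congr hae.symm
  -- closed forms for the four Bregman integrals
  have eq1 : ∫ ω, D (Y ω) (X ω) ∂μ
      = (∫ ω, F (Y ω) ∂μ) - (∫ ω, F (X ω) ∂μ)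
        - (∫ ω, (inner ℝ (φ (X ω)) (Y ω) : ℝ) ∂μ)
        + (∫ ω, (inner ℝ (φ (X ω)) (X ω) : ℝ) ∂μ) := by
    have hae : (fun ω => D (Y ω) (X ω)) =ᵐ[μ]
        fun ω => F (Y ω) - F (X ω) - (inner ℝ (φ (X ω)) (Y ω) : ℝ)
          + (inner ℝ (φ (X ω)) (X ω) : ℝ) := by
      filter_upwards [hXS] with ω h
      rw [hD, ← hφeq _ h, inner_sub_right]; ring
    have hI1 : Integrable (fun ω => F (Y ω) - F (X ω)) μ := hFYint.sub hFXint
    have hI2 : Integrable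
        (fun ω => F (Y ω) - F (X ω) - (inner ℝ (φ (X ω)) (Y ω) : ℝ)) μ := hI1.sub hCint
    rw [integral_congr_ae hae, integral_add hI2 hE1, integral_sub hI1 hCint,
      integral_sub hFYint hFXint]
  have hYmint : Integrable (fun ω => Y ω - m) μ := hYint.sub (integrable_const m)
  have hinner_m : Integrable (fun ω => (inner ℝ (f' m) (Y ω - m) : ℝ)) μ := by
    have h : (fun ω => (inner ℝ (f' m) (Y ω - m) : ℝ))
        = fun ω => (innerSL ℝ (f' m)) (Y ω - m) := by
      funext ω; simp only [innerSL_apply_apply]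
    rw [h]
    exact (innerSL ℝ (f' m)).integrable_comp hYmint
  have eq2 : ∫ ω, D (Y ω) m ∂μ = (∫ ω, F (Y ω) ∂μ) - F m := by
    have h0 : (fun ω => D (Y ω) m)
        = fun ω => F (Y ω) - F m - (inner ℝ (f' m) (Y ω - m) : ℝ) := by
      funext ω; rw [hD]
    have h2 : (∫ ω, (Y ω - m) ∂μ) = 0 := by
      rw [integral_sub hYint (integrable_const m), integral_const]
      simp [← hm]
    have hI1 : Integrable (fun _ : Ω => F m) μ := integrable_const _
    have hI2 : Integrable (fun ω => F (Y ω) - F m) μ := hFYint.sub hI1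
    rw [h0, integral_sub hI2 hinner_m, integral_sub hFYint hI1,
      integral_inner hYmint (f' m), h2, inner_zero_right, integral_const]
    simp
  have eq3 : D m EX = F m - F EX - (inner ℝ z m : ℝ) + (inner ℝ z EX : ℝ) := by
    rw [hD, hz, inner_sub_right]; ring
  have eq4 : ∫ ω, D EX (X ω) ∂μ
      = F EX - (∫ ω, F (X ω) ∂μ) - (inner ℝ z EX : ℝ)
        + (∫ ω, (inner ℝ (φ (X ω)) (X ω) : ℝ) ∂μ) := by
    have hae : (fun ω => D EX (X ω)) =ᵐ[μ]
        fun ω => F EX - F (X ω) - (inner ℝ (φ (X ω)) EX : ℝ)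
          + (inner ℝ (φ (X ω)) (X ω) : ℝ) := by
      filter_upwards [hXS] with ω h
      rw [hD, ← hφeq _ h, inner_sub_right]; ring
    have h1 : ∫ ω, (inner ℝ (φ (X ω)) EX : ℝ) ∂μ = (inner ℝ z EX : ℝ) := by
      have h : (fun ω => (inner ℝ (φ (X ω)) EX : ℝ)) = fun ω => (inner ℝ EX (φ (X ω)) : ℝ) := by
        funext ω; exact real_inner_comm _ _
      rw [h, integral_inner hZint EX]
      exact real_inner_comm _ _
    have hI1 : Integrable (fun _ : Ω => F EX) μ := integrable_const _
    have hI2 : Integrable (fun ω => F EX - F (X ω)) μ := hI1.sub hFXint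
    have hI3 : Integrable
        (fun ω => F EX - F (X ω) - (inner ℝ (φ (X ω)) EX : ℝ)) μ := hI2.sub hinnerEX
    rw [integral_congr_ae hae, integral_add hI3 hE1, integral_sub hI2 hinnerEX,
      integral_sub hI1 hFXint, h1, integral_const]
    simp
  rw [eq1, eq2, eq3, eq4, hkey]
  ring
end

section
/- Conditional bias overestimates the total bias: for a fixed label y, E_Z D_F[y || ℰ(X|Z)] = D_F[y || ℰX] + E_Z D_F[ℰX || ℰ(X|Z)], and the correction term E_Z D_F[ℰX || ℰ(X|Z)] is nonnegative. -/
open MeasureTheory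

/-- Gradient inequality for convex functions: `⟪∇F x, z - x⟫ ≤ F z - F x`. -/
lemma grad_ineq_aux {d : ℕ} {S : Set (EuclideanSpace ℝ (Fin d))}
    {F : EuclideanSpace ℝ (Fin d) → ℝ} (hF : ConvexOn ℝ S F)
    {x z G : EuclideanSpace ℝ (Fin d)} (hx : x ∈ S) (hz : z ∈ S)
    (hG : HasGradientAt F G x) :
    (inner ℝ G (z - x) : ℝ) ≤ F z - F x := by
  set v := z - x with hv
  have hline : HasDerivAt (fun t : ℝ => F (x + t • v)) ((inner ℝ G v : ℝ)) 0 := by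
    have h1 : HasDerivAt (fun t : ℝ => x + t • v) v 0 := by
      simpa using ((hasDerivAt_id (0:ℝ)).smul_const v).const_add x
    have h2 : HasFDerivAt F (InnerProductSpace.toDual ℝ _ G) (x + (0:ℝ) • v) := by
      simpa using (hasGradientAt_iff_hasFDerivAt.mp hG)
    exact (by simpa using h2.comp_hasDerivAt 0 h1 :
      HasDerivAt (F ∘ fun t : ℝ => x + t • v) (inner ℝ G v) 0)
  have hslope : Filter.Tendsto (slope (fun t : ℝ => F (x + t • v)) 0)
      (nhdsWithin 0 (Set.Ioi 0)) (nhds (inner ℝ G v : ℝ)) :=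
    (hasDerivAt_iff_tendsto_slope.mp hline).mono_left
      (nhdsWithin_mono 0 (fun t ht => ne_of_gt ht))
  refine le_of_tendsto hslope ?_
  filter_upwards [Ioc_mem_nhdsGT (zero_lt_one)] with t ht
  have ht0 : 0 < t := ht.1
  have ht1 : t ≤ 1 := ht.2
  have hconv : F (x + t • v) ≤ (1 - t) * F x + t * F z := by
    have := hF.2 hx hz (by linarith : (0:ℝ) ≤ 1 - t) (le_of_lt ht0) (by ring)
    have heq : (1 - t) • x + t • z = x + t • v := by
      rw [hv]; module
    rw [heq] at this
    simpa using this
  have hsl : slope (fun t : ℝ => F (x + t • v)) 0 t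
      = (F (x + t • v) - F x) / t := by
    rw [slope_def_field]
    norm_num
  rw [hsl, div_le_iff₀ ht0]
  nlinarith [hconv]

/-- Conditional bias overestimates the total bias:
`E_Z D_F[y ‖ ℰ(X|Z)] = D_F[y ‖ ℰX] + E_Z D_F[ℰX ‖ ℰ(X|Z)]`, and the correction term
`E_Z D_F[ℰX ‖ ℰ(X|Z)]` is nonnegative. -/
theorem conditional_bias_overestimates {d : ℕ}
    (S : Set (EuclideanSpace ℝ (Fin d))) (hSc : IsClosed S) (hSv : Convex ℝ S)
    (F : EuclideanSpace ℝ (Fin d) → ℝ)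
    (f' g : EuclideanSpace ℝ (Fin d) → EuclideanSpace ℝ (Fin d))
    (hF : StrictConvexOn ℝ S F)
    (hdiff : ∀ x ∈ S, HasGradientAt F (f' x) x)
    (hg : ∀ x ∈ S, g (f' x) = x)
    (D : EuclideanSpace ℝ (Fin d) → EuclideanSpace ℝ (Fin d) → ℝ)
    (hD : ∀ y x, D y x = F y - F x - ((inner ℝ (f' x) (y - x) : ℝ)))
    {Ω β : Type*} [MeasurableSpace Ω] [MeasurableSpace β]
    (μ : Measure Ω) [IsProbabilityMeasure μ]
    (X : Ω → EuclideanSpace ℝ (Fin d)) (Z : Ω → β)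
    (hXm : AEMeasurable X μ) (hZm : Measurable Z)
    (hXS : ∀ᵐ ω ∂μ, X ω ∈ S)
    (hdint : Integrable (fun ω => f' (X ω)) μ)
    (EX : EuclideanSpace ℝ (Fin d)) (hEX : EX = g (∫ ω, f' (X ω) ∂μ))
    (hrange : f' EX = ∫ ω, f' (X ω) ∂μ) (hmem : EX ∈ S)
    (C : Ω → EuclideanSpace ℝ (Fin d))
    (hC : ∀ ω, C ω = g ((μ[(fun ω' => f' (X ω')) | MeasurableSpace.comap Z inferInstance]) ω))
    (hCrange : ∀ᵐ ω ∂μ,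
      f' (C ω) = (μ[(fun ω' => f' (X ω')) | MeasurableSpace.comap Z inferInstance]) ω)
    (hCS : ∀ᵐ ω ∂μ, C ω ∈ S)
    (hFCint : Integrable (fun ω => F (C ω)) μ)
    (hCint : Integrable (fun ω => f' (C ω)) μ)
    (y : EuclideanSpace ℝ (Fin d)) (hy : y ∈ S)
    (hintyC : Integrable (fun ω => D y (C ω)) μ)
    (hintEXC : Integrable (fun ω => D EX (C ω)) μ) :
    (∫ ω, D y (C ω) ∂μ = D y EX + ∫ ω, D EX (C ω) ∂μ) ∧
      0 ≤ ∫ ω, D EX (C ω) ∂μ := by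
  have hm : MeasurableSpace.comap Z inferInstance ≤ (inferInstance : MeasurableSpace Ω) :=
    hZm.comap_le
  -- tower property: ∫ f'(C) = ∫ f'(X) = f' EX
  have htower : ∫ ω, f' (C ω) ∂μ = f' EX := by
    have h1 : ∫ ω, f' (C ω) ∂μ
        = ∫ ω, (μ[(fun ω' => f' (X ω')) | MeasurableSpace.comap Z inferInstance]) ω ∂μ :=
      integral_congr_ae hCrange
    rw [h1, integral_condExp hm]
    exact hrange.symm
  -- pointwise identity
  have hpt : ∀ᵐ ω ∂μ, D y (C ω)
      = D EX (C ω) + (F y - F EX) - (inner ℝ (f' (C ω)) (y - EX) : ℝ) := by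
    filter_upwards [hCS] with ω hω
    rw [hD, hD]
    have : (inner ℝ (f' (C ω)) (y - C ω) : ℝ)
        = (inner ℝ (f' (C ω)) (EX - C ω) : ℝ) + (inner ℝ (f' (C ω)) (y - EX) : ℝ) := by
      rw [← inner_add_right]
      congr 1
      abel
    rw [this]
    ring
  have hinner_int : Integrable (fun ω => (inner ℝ (f' (C ω)) (y - EX) : ℝ)) μ :=
    hCint.inner_const (y - EX)
  have hEadd : Integrable (fun ω => D EX (C ω) + (F y - F EX)) μ := hintEXC.add (integrable_const _)
  have hintegral : ∫ ω, D y (C ω) ∂μ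
      = ∫ ω, D EX (C ω) ∂μ + (F y - F EX) - (inner ℝ (f' EX) (y - EX) : ℝ) := by
    calc ∫ ω, D y (C ω) ∂μ
        = ∫ ω, (D EX (C ω) + (F y - F EX) - (inner ℝ (f' (C ω)) (y - EX) : ℝ)) ∂μ :=
          integral_congr_ae hpt
      _ = ∫ ω, D EX (C ω) ∂μ + (F y - F EX) - ∫ ω, (inner ℝ (f' (C ω)) (y - EX) : ℝ) ∂μ := by
          rw [integral_sub hEadd hinner_int, integral_add hintEXC (integrable_const _)]
          simp [measure_univ]
      _ = ∫ ω, D EX (C ω) ∂μ + (F y - F EX) - (inner ℝ (f' EX) (y - EX) : ℝ) := by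
          congr 1
          have : ∫ ω, (inner ℝ (f' (C ω)) (y - EX) : ℝ) ∂μ
              = ∫ ω, (inner ℝ (y - EX) (f' (C ω)) : ℝ) ∂μ := by
            simp_rw [real_inner_comm]
          rw [this, integral_inner hCint, htower, real_inner_comm]
  constructor
  · rw [hintegral, hD y EX]; ring
  · refine integral_nonneg_of_ae ?_
    filter_upwards [hCS] with ω hω
    simp only [Pi.zero_apply]
    rw [hD]
    have := grad_ineq_aux hF.convexOn hω hmem (hdiff _ hω)
    linarith
end

section
/- Conditional variance underestimates the total variance: E_Z E[D_F[ℰ(X|Z) || X] | Z] = E D_F[ℰX || X] - E_Z D_F[ℰX || ℰ(X|Z)]. -/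
set_option maxHeartbeats 1000000

open MeasureTheory
open scoped RealInnerProductSpace

/-- Conditional variance underestimates the total variance:
`E_Z E[D_F[ℰ(X|Z) ‖ X] | Z] = E D_F[ℰX ‖ X] - E_Z D_F[ℰX ‖ ℰ(X|Z)]`. -/
theorem conditional_variance_underestimates {d : ℕ}
    (S : Set (EuclideanSpace ℝ (Fin d))) (hSc : IsClosed S) (hSv : Convex ℝ S)
    (F : EuclideanSpace ℝ (Fin d) → ℝ)
    (f' g : EuclideanSpace ℝ (Fin d) → EuclideanSpace ℝ (Fin d))
    (hF : StrictConvexOn ℝ S F)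
    (hdiff : ∀ x ∈ S, HasGradientAt F (f' x) x)
    (hg : ∀ x ∈ S, g (f' x) = x)
    (D : EuclideanSpace ℝ (Fin d) → EuclideanSpace ℝ (Fin d) → ℝ)
    (hD : ∀ y x, D y x = F y - F x - ((inner ℝ (f' x) (y - x) : ℝ)))
    {Ω β : Type*} [MeasurableSpace Ω] [MeasurableSpace β]
    (μ : Measure Ω) [IsProbabilityMeasure μ]
    (X : Ω → EuclideanSpace ℝ (Fin d)) (Z : Ω → β)
    (hXm : AEMeasurable X μ) (hZm : Measurable Z)
    (hXS : ∀ᵐ ω ∂μ, X ω ∈ S)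
    (hdint : Integrable (fun ω => f' (X ω)) μ)
    (EX : EuclideanSpace ℝ (Fin d)) (hEX : EX = g (∫ ω, f' (X ω) ∂μ))
    (hrange : f' EX = ∫ ω, f' (X ω) ∂μ) (hmem : EX ∈ S)
    (C : Ω → EuclideanSpace ℝ (Fin d))
    (hC : ∀ ω, C ω = g ((μ[(fun ω' => f' (X ω')) | MeasurableSpace.comap Z inferInstance]) ω))
    (hCrange : ∀ᵐ ω ∂μ,
      f' (C ω) = (μ[(fun ω' => f' (X ω')) | MeasurableSpace.comap Z inferInstance]) ω)
    (hCS : ∀ᵐ ω ∂μ, C ω ∈ S)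
    (hCint : Integrable (fun ω => f' (C ω)) μ)
    (hintV : Integrable (fun ω => D EX (X ω)) μ)
    (hintCV : Integrable (fun ω => D (C ω) (X ω)) μ)
    (hintEXC : Integrable (fun ω => D EX (C ω)) μ) :
    ∫ ω, (μ[(fun ω' => D (C ω') (X ω')) | MeasurableSpace.comap Z inferInstance]) ω ∂μ
      = (∫ ω, D EX (X ω) ∂μ) - ∫ ω, D EX (C ω) ∂μ := by
  classical
  rename_i mOmega mbeta pmu
  set m := MeasurableSpace.comap Z inferInstance with hmdef
  have hm := hZm.comap_le
  haveI : SigmaFinite (μ.trim hm) := (isFiniteMeasure_trim hm).toSigmaFinite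
  letI : MeasurableSpace Ω := mOmega
  set h : Ω → EuclideanSpace ℝ (Fin d) := μ[(fun ω' => f' (X ω')) | m] with hh
  -- Step A : integral of the conditional expectation is the integral
  rw [integral_condExp hm]
  -- pointwise algebraic identity
  have expand : ∀ ω, D EX (X ω) - D EX (C ω) - D (C ω) (X ω)
      = ⟪f' (X ω) - f' (C ω), C ω - EX⟫ := by
    intro ω
    simp only [hD, inner_sub_left, inner_sub_right]
    ring
  have hIsub : Integrable (fun ω => ⟪f' (X ω) - f' (C ω), C ω - EX⟫) μ := by
    have e : (fun ω => ⟪f' (X ω) - f' (C ω), C ω - EX⟫)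
        = fun ω => D EX (X ω) - D EX (C ω) - D (C ω) (X ω) := by
      funext ω; rw [expand ω]
    rw [e]; exact (hintV.sub hintEXC).sub hintCV
  have hsubint : Integrable (fun ω => f' (X ω) - f' (C ω)) μ := hdint.sub hCint
  have hIEX : Integrable (fun ω => ⟪f' (X ω) - f' (C ω), EX⟫) μ := by
    have h1 := (innerSL ℝ EX).integrable_comp hsubint
    refine h1.congr (Filter.Eventually.of_forall fun ω => ?_)
    simp only [ContinuousLinearMap.coe_comp', Function.comp_apply, innerSL_apply_apply]
    exact real_inner_comm _ _
  have hCtermInt : Integrable (fun ω => ⟪f' (X ω) - f' (C ω), C ω⟫) μ := by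
    have e : (fun ω => ⟪f' (X ω) - f' (C ω), C ω⟫)
        = fun ω => ⟪f' (X ω) - f' (C ω), C ω - EX⟫
            + ⟪f' (X ω) - f' (C ω), EX⟫ := by
      funext ω
      rw [← inner_add_right]
      simp
    rw [e]; exact hIsub.add hIEX
  -- the EX term vanishes
  have hEXterm : ∫ ω, ⟪f' (X ω) - f' (C ω), EX⟫ ∂μ = 0 := by
    have e : (fun ω => ⟪f' (X ω) - f' (C ω), EX⟫)
        = fun ω => ⟪EX, f' (X ω) - f' (C ω)⟫ := by
      funext ω; rw [real_inner_comm]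
    rw [e, integral_inner hsubint]
    have h2 : ∫ ω, (f' (X ω) - f' (C ω)) ∂μ = 0 := by
      rw [integral_sub hdint hCint]
      have h3 : ∫ ω, f' (C ω) ∂μ = ∫ ω, h ω ∂μ := integral_congr_ae hCrange
      rw [h3, hh, integral_condExp hm, sub_self]
    rw [h2, inner_zero_right]
  -- construct a measurable m-measurable version of C
  have hφ : ∃ φ : EuclideanSpace ℝ (Fin d) → EuclideanSpace ℝ (Fin d),
      Measurable φ ∧ ∀ x ∈ S, φ x = f' x := by
    refine ⟨fun x => (InnerProductSpace.toDual ℝ _).symm (fderiv ℝ F x), ?_, ?_⟩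
    · exact (LinearIsometryEquiv.continuous _).measurable.comp (measurable_fderiv ℝ F)
    · intro x hx
      have h1 : HasFDerivAt F ((InnerProductSpace.toDual ℝ (EuclideanSpace ℝ (Fin d))) (f' x)) x :=
        hasGradientAt_iff_hasFDerivAt.mp (hdiff x hx)
      show (InnerProductSpace.toDual ℝ (EuclideanSpace ℝ (Fin d))).symm (fderiv ℝ F x) = f' x
      rw [h1.fderiv, LinearIsometryEquiv.symm_apply_apply]
  obtain ⟨φ, hφm, hφS⟩ := hφ
  haveI : PolishSpace (S : Set (EuclideanSpace ℝ (Fin d))) := hSc.polishSpace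
  have hinj : Function.Injective
      (fun s : S => φ (s : EuclideanSpace ℝ (Fin d))) := by
    intro s t hst
    have h1 : f' (s : EuclideanSpace ℝ (Fin d)) = f' (t : EuclideanSpace ℝ (Fin d)) := by
      rw [← hφS _ s.2, ← hφS _ t.2]; exact hst
    have h2 := congrArg g h1
    rw [hg _ s.2, hg _ t.2] at h2
    exact Subtype.ext h2
  have hemb : MeasurableEmbedding (fun s : S => φ (s : EuclideanSpace ℝ (Fin d))) :=
    (hφm.comp measurable_subtype_coe).measurableEmbedding hinj
  obtain ⟨r, hrm, hre⟩ := hemb.exists_measurable_extend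
    (measurable_subtype_coe) (fun _ => ⟨0⟩)
  set C' : Ω → EuclideanSpace ℝ (Fin d) := fun ω => r (h ω) with hC'def
  have hhm : StronglyMeasurable[m] h := stronglyMeasurable_condExp
  have hC'sm : StronglyMeasurable[m] C' := (hrm.comp hhm.measurable).stronglyMeasurable
  have hCC' : C =ᵐ[μ] C' := by
    filter_upwards [hCS, hCrange] with ω h1 h2
    have h3 : φ (C ω) = h ω := by rw [hφS _ h1, h2]
    have h4 : r (φ (C ω)) = C ω := congrFun hre (⟨C ω, h1⟩ : S)
    calc C ω = r (φ (C ω)) := h4.symm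
      _ = r (h ω) := by rw [h3]
      _ = C' ω := rfl
  set W : Ω → EuclideanSpace ℝ (Fin d) := fun ω => f' (X ω) - h ω with hWdef
  have hWint : Integrable W μ := hdint.sub integrable_condExp
  have hkey2eq : (fun ω => ⟪f' (X ω) - f' (C ω), C ω⟫) =ᵐ[μ]
      fun ω => ⟪W ω, C' ω⟫ := by
    filter_upwards [hCC', hCrange] with ω h1 h2
    rw [h2, h1]
  have hWC'int : Integrable (fun ω => ⟪W ω, C' ω⟫) μ := hCtermInt.congr hkey2eq
  -- coordinates
  have hWi : ∀ i : Fin d, Integrable (fun ω => W ω i) μ := by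
    intro i
    have h1 := (EuclideanSpace.proj (𝕜 := ℝ) i).integrable_comp hWint
    exact h1.congr (Filter.Eventually.of_forall fun ω => rfl)
  have hcoord : ∀ i : Fin d, μ[(fun ω => W ω i) | m] =ᵐ[μ] 0 := by
    intro i
    have hYi : Integrable (fun ω => f' (X ω) i) μ := by
      have h1 := (EuclideanSpace.proj (𝕜 := ℝ) i).integrable_comp hdint
      exact h1.congr (Filter.Eventually.of_forall fun ω => rfl)
    have hhint : Integrable h μ := integrable_condExp
    have hhi : Integrable (fun ω => h ω i) μ := by
      have h1 := (EuclideanSpace.proj (𝕜 := ℝ) i).integrable_comp hhint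
      exact h1.congr (Filter.Eventually.of_forall fun ω => rfl)
    have hhism : StronglyMeasurable[m] (fun ω => h ω i) :=
      (EuclideanSpace.proj (𝕜 := ℝ) i).continuous.comp_stronglyMeasurable hhm
    have hhicond : (fun ω => h ω i) =ᵐ[μ] μ[(fun ω => f' (X ω) i) | m] := by
      refine ae_eq_condExp_of_forall_setIntegral_eq hm hYi
        (fun s _ _ => hhi.integrableOn) (fun s hs hμs => ?_)
        hhism.aestronglyMeasurable
      have h1 : ∫ ω in s, h ω i ∂μ = (∫ ω in s, h ω ∂μ) i := by
        have := (EuclideanSpace.proj (𝕜 := ℝ) i).integral_comp_comm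
          (hhint.integrableOn (s := s))
        exact this
      have h2 : ∫ ω in s, f' (X ω) i ∂μ = (∫ ω in s, f' (X ω) ∂μ) i := by
        have := (EuclideanSpace.proj (𝕜 := ℝ) i).integral_comp_comm
          (hdint.integrableOn (s := s))
        exact this
      rw [h1, h2, hh, setIntegral_condExp hm hdint hs]
    have hsub : μ[(fun ω => W ω i) | m] =ᵐ[μ]
        μ[(fun ω => f' (X ω) i) | m] - μ[(fun ω => h ω i) | m] := by
      have e : (fun ω => W ω i) = (fun ω => f' (X ω) i) - (fun ω => h ω i) := rfl
      rw [e]; exact condExp_sub hYi hhi m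
    have hhicond2 : μ[(fun ω => h ω i) | m] = fun ω => h ω i :=
      condExp_of_stronglyMeasurable hm hhism hhi
    refine hsub.trans ?_
    rw [hhicond2]
    filter_upwards [hhicond] with ω hω
    simp only [Pi.sub_apply, Pi.zero_apply]
    rw [← hω, sub_self]
  -- truncations
  have hAm : ∀ n : ℕ, MeasurableSet[m] {ω' | ‖C' ω'‖ ≤ (n : ℝ)} := by
    intro n
    exact hC'sm.norm.measurable measurableSet_Iic
  have habs : ∀ (i : Fin d) (x : EuclideanSpace ℝ (Fin d)), |x i| ≤ ‖x‖ := by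
    intro i x
    have h1 : ⟪EuclideanSpace.single i (1 : ℝ), x⟫ = x i := by
      rw [EuclideanSpace.inner_single_left]; simp
    calc |x i| = |⟪EuclideanSpace.single i (1 : ℝ), x⟫| := by rw [h1]
      _ ≤ ‖EuclideanSpace.single i (1 : ℝ)‖ * ‖x‖ := abs_real_inner_le_norm _ _
      _ = ‖x‖ := by rw [EuclideanSpace.norm_single]; simp
  have htrunc : ∀ n : ℕ,
      ∫ ω, Set.indicator {ω' | ‖C' ω'‖ ≤ (n : ℝ)} (fun ω' => ⟪W ω', C' ω'⟫) ω ∂μ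
        = 0 := by
    intro n
    set A : Set Ω := {ω' | ‖C' ω'‖ ≤ (n : ℝ)} with hA
    set Cn : Ω → EuclideanSpace ℝ (Fin d) := A.indicator C' with hCn
    have hCnsm : StronglyMeasurable[m] Cn := hC'sm.indicator (hAm n)
    have hCnbd : ∀ ω, ‖Cn ω‖ ≤ (n : ℝ) := by
      intro ω
      by_cases hω : ω ∈ A
      · rw [hCn]; rw [Set.indicator_of_mem hω]; exact hω
      · rw [hCn]; rw [Set.indicator_of_notMem hω]; simp
    have hind : ∀ ω, Set.indicator A (fun ω' => ⟪W ω', C' ω'⟫) ω = ⟪W ω, Cn ω⟫ := by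
      intro ω
      by_cases hω : ω ∈ A
      · rw [Set.indicator_of_mem hω, hCn, Set.indicator_of_mem hω]
      · rw [Set.indicator_of_notMem hω, hCn, Set.indicator_of_notMem hω,
          inner_zero_right]
    simp only [hind]
    have hinner : ∀ ω, ⟪W ω, Cn ω⟫ = ∑ i : Fin d, Cn ω i * W ω i := by
      intro ω
      rw [PiLp.inner_apply]
      refine Finset.sum_congr rfl fun i _ => ?_
      simp [RCLike.inner_apply, mul_comm]
    simp only [hinner]
    have hCni_meas : ∀ i : Fin d, StronglyMeasurable[m] (fun ω => Cn ω i) := fun i =>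
      (EuclideanSpace.proj (𝕜 := ℝ) i).continuous.comp_stronglyMeasurable hCnsm
    have hprod_int : ∀ i : Fin d, Integrable (fun ω => Cn ω i * W ω i) μ := by
      intro i
      refine (hWi i).bdd_mul (c := (n : ℝ)) ((hCni_meas i).mono hm).aestronglyMeasurable
        (Filter.Eventually.of_forall ?_)
      intro ω
      calc ‖Cn ω i‖ = |Cn ω i| := rfl
        _ ≤ ‖Cn ω‖ := habs i (Cn ω)
        _ ≤ (n : ℝ) := hCnbd ω
    rw [integral_finset_sum Finset.univ (fun i _ => hprod_int i)]
    refine Finset.sum_eq_zero fun i _ => ?_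
    have hpull := condExp_mul_of_stronglyMeasurable_left (μ := μ) (hCni_meas i)
      (hprod_int i) (hWi i)
    have h1 : ∫ ω, Cn ω i * W ω i ∂μ
        = ∫ ω, (fun ω' => Cn ω' i) ω * (μ[(fun ω' => W ω' i) | m]) ω ∂μ := by
      rw [← integral_condExp hm (f := fun ω => Cn ω i * W ω i)]
      refine integral_congr_ae ?_
      exact hpull
    rw [h1]
    have h2 : (fun ω => Cn ω i * (μ[(fun ω' => W ω' i) | m]) ω) =ᵐ[μ] 0 := by
      filter_upwards [hcoord i] with ω hω
      simp only [Pi.zero_apply] at hω ⊢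
      rw [hω, mul_zero]
    rw [integral_congr_ae h2]
    simp
  -- limit
  have hlim : Filter.Tendsto
      (fun n : ℕ => ∫ ω, Set.indicator {ω' | ‖C' ω'‖ ≤ (n : ℝ)}
        (fun ω' => ⟪W ω', C' ω'⟫) ω ∂μ)
      Filter.atTop (nhds (∫ ω, ⟪W ω, C' ω⟫ ∂μ)) := by
    refine tendsto_integral_of_dominated_convergence
      (fun ω => |⟪W ω, C' ω⟫|) (fun n => ?_) hWC'int.abs (fun n => ?_) ?_
    · exact hWC'int.1.indicator (hm _ (hAm n))
    · filter_upwards with ω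
      exact norm_indicator_le_norm_self _ _
    · filter_upwards with ω
      refine Filter.Tendsto.congr' ?_ tendsto_const_nhds
      filter_upwards [Filter.eventually_ge_atTop ⌈‖C' ω‖⌉₊] with n hn
      have : ω ∈ {ω' | ‖C' ω'‖ ≤ (n : ℝ)} := by
        simp only [Set.mem_setOf_eq]
        exact le_trans (Nat.le_ceil _) (Nat.cast_le.mpr hn)
      rw [Set.indicator_of_mem this]
  have hC'zero : ∫ ω, ⟪W ω, C' ω⟫ ∂μ = 0 := by
    have heq : (fun n : ℕ => ∫ ω, Set.indicator {ω' | ‖C' ω'‖ ≤ (n : ℝ)}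
        (fun ω' => ⟪W ω', C' ω'⟫) ω ∂μ) = fun _ => (0 : ℝ) := funext htrunc
    rw [heq] at hlim
    exact (tendsto_nhds_unique hlim tendsto_const_nhds)
  have key2 : ∫ ω, ⟪f' (X ω) - f' (C ω), C ω⟫ ∂μ = 0 := by
    rw [integral_congr_ae hkey2eq]; exact hC'zero
  -- assemble
  have key : ∫ ω, ⟪f' (X ω) - f' (C ω), C ω - EX⟫ ∂μ = 0 := by
    have e : (fun ω => ⟪f' (X ω) - f' (C ω), C ω - EX⟫)
        = fun ω => ⟪f' (X ω) - f' (C ω), C ω⟫ - ⟪f' (X ω) - f' (C ω), EX⟫ := by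
      funext ω; rw [inner_sub_right]
    rw [e, integral_sub hCtermInt hIEX, key2, hEXterm, sub_zero]
  have hsum : ∫ ω, (D EX (X ω) - D EX (C ω) - D (C ω) (X ω)) ∂μ = 0 := by
    have e : (fun ω => D EX (X ω) - D EX (C ω) - D (C ω) (X ω))
        = fun ω => ⟪f' (X ω) - f' (C ω), C ω - EX⟫ := funext expand
    rw [e]; exact key
  have hint1 : Integrable (fun ω => D EX (X ω) - D EX (C ω)) μ := hintV.sub hintEXC
  rw [integral_sub hint1 hintCV, integral_sub hintV hintEXC] at hsum
  linarith
end

section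
/- Primal ensembling does not preserve bias for the KL divergence: there exist a distribution over probability vectors X ∈ Δ^1 ⊂ ℝ^2, an n ≥ 2, and a label y ∈ {0,1} such that, with X̂ = (1/n)∑_{i=1}^n X_i for i.i.d. X_i ~ X, KL[y || ℰX̂] < KL[y || ℰX] while KL[1−y || ℰX̂] > KL[1−y || ℰX], where ℰW = softmax(E log W). -/
open MeasureTheory ProbabilityTheory
open scoped BigOperators ENNReal

noncomputable section AuxKLBias

namespace AuxKLBias

/-- fair coin measure on `Bool` -/
def bern : Measure Bool := (2:ℝ≥0∞)⁻¹ • Measure.dirac true + (2:ℝ≥0∞)⁻¹ • Measure.dirac false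

instance : IsProbabilityMeasure bern := by
  constructor
  simp only [bern, Measure.coe_add, Measure.coe_smul, Pi.add_apply, Pi.smul_apply,
    measure_univ, smul_eq_mul, mul_one]
  rw [ENNReal.inv_two_add_inv_two]

lemma bern_singleton (b : Bool) : bern {b} = 2⁻¹ := by
  cases b <;> simp [bern, Measure.dirac_apply]

abbrev Om := Fin 2 → Bool

def μm : Measure Om := Measure.pi fun _ => bern

instance : IsProbabilityMeasure μm := by unfold μm; infer_instance

lemma μm_singleton (ω : Om) : μm {ω} = 4⁻¹ := by
  rw [show ({ω} : Set Om) = Set.univ.pi (fun i => {ω i}) from (Set.univ_pi_singleton ω).symm,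
    μm, Measure.pi_pi]
  rw [Fin.prod_univ_two, bern_singleton, bern_singleton]
  rw [← ENNReal.mul_inv (by norm_num) (by norm_num)]
  norm_num

lemma integral_eq (g : Om → ℝ) :
    ∫ ω, g ω ∂μm
      = 4⁻¹ * (g (Fin.cons true (Fin.cons true finZeroElim))
          + g (Fin.cons true (Fin.cons false finZeroElim))
          + g (Fin.cons false (Fin.cons true finZeroElim))
          + g (Fin.cons false (Fin.cons false finZeroElim))) := by
  rw [integral_fintype (Integrable.of_finite)]
  rw [← Equiv.sum_comp (piFinTwoEquiv fun _ => Bool).symm]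
  simp only [Measure.real, μm_singleton, Fintype.sum_prod_type, Fintype.sum_bool, piFinTwoEquiv,
    Equiv.coe_fn_symm_mk, smul_eq_mul]
  have h4 : ((4:ℝ≥0∞)⁻¹).toReal = (4:ℝ)⁻¹ := by
    rw [ENNReal.toReal_inv]; norm_num
  rw [h4]; ring

lemma eval_preimage (i : Fin 2) (s : Set Bool) :
    μm ((fun ω : Om => ω i) ⁻¹' s) = bern s := by
  have h : ((fun ω : Om => ω i) ⁻¹' s)
      = Set.univ.pi (Function.update (fun _ => Set.univ) i s) := by
    rw [Set.univ_pi_update_univ]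
  rw [h, μm, Measure.pi_pi]
  calc ∏ j : Fin 2, bern (Function.update (fun _ => (Set.univ : Set Bool)) i s j)
      = bern (Function.update (fun _ => (Set.univ : Set Bool)) i s i) :=
        Finset.prod_eq_single i
          (fun j _ hj => by rw [Function.update_of_ne hj]; exact measure_univ)
          (fun h => absurd (Finset.mem_univ i) h)
    _ = bern s := by rw [Function.update_self]

lemma indep_eval : iIndepFun (fun i (ω : Om) => ω i) μm := by
  rw [iIndepFun_iff_measure_inter_preimage_eq_mul]
  intro S sets hsets
  classical
  have h1 : (⋂ i ∈ S, (fun ω : Om => ω i) ⁻¹' sets i)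
      = Set.univ.pi (fun i => if i ∈ S then sets i else Set.univ) := by
    ext ω
    simp only [Set.mem_iInter, Set.mem_preimage, Set.mem_pi, Set.mem_univ, true_implies]
    constructor
    · intro h i
      by_cases hi : i ∈ S <;> simp [hi, h]
    · intro h i hi
      have := h i; simpa [hi] using this
  rw [h1, μm, Measure.pi_pi]
  simp only [apply_ite bern, measure_univ]
  rw [Finset.prod_ite_mem Finset.univ S, Finset.univ_inter]
  exact Finset.prod_congr rfl fun i _ => (eval_preimage i (sets i)).symm

lemma log_ratio (a b : ℝ) :
    Real.log ((Real.exp a + Real.exp b) / Real.exp a) = Real.log (1 + Real.exp (b - a)) := by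
  congr 1
  rw [Real.exp_sub]
  field_simp

lemma key1 (a b c d : ℝ) (h : b - a < d - c) :
    Real.log ((Real.exp a + Real.exp b) / Real.exp a)
      < Real.log ((Real.exp c + Real.exp d) / Real.exp c) := by
  rw [log_ratio, log_ratio]
  apply Real.log_lt_log (by positivity)
  have := Real.exp_lt_exp.mpr h
  linarith

lemma key2 (a b c d : ℝ) (h : a - b < c - d) :
    Real.log ((Real.exp a + Real.exp b) / Real.exp b)
      < Real.log ((Real.exp c + Real.exp d) / Real.exp d) := by
  rw [add_comm (Real.exp a), add_comm (Real.exp c)]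
  exact key1 b a d c h

lemma map_eval (i : Fin 2) : μm.map (fun ω : Om => ω i) = bern := by
  ext s hs
  rw [Measure.map_apply (measurable_pi_apply i) hs, eval_preimage]

end AuxKLBias

end AuxKLBias

/-- Primal ensembling does not preserve the bias for the KL divergence: there exist a
distribution over probability vectors on two outcomes, an `n ≥ 2`, and a one-hot label
`y ∈ {0,1}` such that, with `X̂ = (1/n)∑ Xᵢ` for i.i.d. `Xᵢ ~ X`, the bias
`KL[y ‖ ℰ·]` strictly decreases while `KL[1-y ‖ ℰ·]` strictly increases, where
`ℰW = softmax(E log W)` is the dual (geometric) mean. -/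
theorem primal_ensembling_does_not_preserve_bias :
    ∃ (Ω : Type) (_ : MeasurableSpace Ω) (μ : Measure Ω) (_ : IsProbabilityMeasure μ)
      (n : ℕ) (X : Ω → Fin 2 → ℝ) (Xs : Fin n → Ω → Fin 2 → ℝ) (y : Fin 2),
      2 ≤ n ∧
      (∀ ω k, 0 < X ω k) ∧ (∀ ω, ∑ k, X ω k = 1) ∧
      (∀ i, Measurable (Xs i)) ∧
      iIndepFun Xs μ ∧
      (∀ i, IdentDistrib (Xs i) X μ μ) ∧
      (let KL : (Fin 2 → ℝ) → (Fin 2 → ℝ) → ℝ :=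
        fun p q => ∑ k, p k * Real.log (p k / q k)
      let dualMean : (Ω → Fin 2 → ℝ) → (Fin 2 → ℝ) :=
        fun W k => Real.exp (∫ ω, Real.log (W ω k) ∂μ)
                    / ∑ j, Real.exp (∫ ω, Real.log (W ω j) ∂μ)
      let Xhat : Ω → Fin 2 → ℝ := fun ω => (n : ℝ)⁻¹ • ∑ i, Xs i ω
      let onehot : Fin 2 → Fin 2 → ℝ := fun a k => if k = a then 1 else 0
      KL (onehot y) (dualMean Xhat) < KL (onehot y) (dualMean X) ∧
        KL (onehot (1 - y)) (dualMean Xhat) > KL (onehot (1 - y)) (dualMean X)) := by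
  classical
  set f : Bool → Fin 2 → ℝ :=
    fun b k => if k = 0 then (if b then 1/2 else 1/4) else (if b then 1/2 else 3/4) with hf
  refine ⟨AuxKLBias.Om, inferInstance, AuxKLBias.μm, inferInstance, 2,
    (fun ω => f (ω 0)), (fun i ω => f (ω i)), 0, le_refl 2, ?_, ?_, ?_, ?_, ?_, ?_⟩
  · intro ω k
    fin_cases k <;> cases h : (ω 0) <;> simp [hf, h]
  · intro ω
    rw [Fin.sum_univ_two]
    cases h : (ω 0) <;> simp [hf, h] <;> norm_num
  · exact fun i => measurable_of_countable _
  · exact AuxKLBias.indep_eval.comp (fun _ => f) (fun _ => measurable_of_countable f)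
  · intro i
    refine ⟨(measurable_of_countable _).aemeasurable, (measurable_of_countable _).aemeasurable, ?_⟩
    have hm : ∀ j : Fin 2,
        AuxKLBias.μm.map (fun ω : AuxKLBias.Om => f (ω j)) = AuxKLBias.bern.map f := by
      intro j
      rw [show (fun ω : AuxKLBias.Om => f (ω j)) = f ∘ (fun ω : AuxKLBias.Om => ω j) from rfl,
        ← Measure.map_map (measurable_of_countable f) (measurable_pi_apply j),
        AuxKLBias.map_eval j]
    rw [hm i, hm 0]
  · dsimp only
    simp only [Fin.isValue, show (1 - 0 : Fin 2) = 1 from rfl, Fin.sum_univ_two]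
    norm_num
    simp only [AuxKLBias.integral_eq, show (1:Fin 2) = Fin.succ 0 from rfl, Fin.cons_succ,
      Fin.cons_zero, hf]
    norm_num
    have h58 : Real.log (5/8:ℝ) = Real.log 5 - Real.log 8 := Real.log_div (by norm_num) (by norm_num)
    have h38 : Real.log (3/8:ℝ) = Real.log 3 - Real.log 8 := Real.log_div (by norm_num) (by norm_num)
    have h34 : Real.log (3/4:ℝ) = Real.log 3 - Real.log 4 := Real.log_div (by norm_num) (by norm_num)
    have h14 : Real.log (1/4:ℝ) = -Real.log 4 := by rw [one_div, Real.log_inv]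
    have h53 : 2 * Real.log 5 < 3 * Real.log 3 := by
      have h := Real.log_lt_log (x := 25) (by norm_num) (by norm_num : (25:ℝ) < 27)
      rw [show (25:ℝ) = 5^2 by norm_num, show (27:ℝ) = 3^3 by norm_num,
        Real.log_pow, Real.log_pow] at h
      push_cast at h
      linarith
    constructor
    · exact AuxKLBias.key1 _ _ _ _ (by linarith)
    · exact AuxKLBias.key2 _ _ _ _ (by linarith)
end
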